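/- (Van der Corput lemma with amplitude.) Let k be a positive integer, let Φ ∈ C^k[a,b] be real-valued with Φ^{(k)} ≥ μ > 0 on [a,b], and let Ψ ∈ C¹[a,b] (complex-valued). If k = 1, assume additionally that Φ' is monotonic on [a,b]. Then there is a constant C_k depending only on k such that for all λ > 0, |∫_a^b e^{iλΦ(y)} Ψ(y) dy| ≤ C_k (λμ)^{−1/k} ( |Ψ(b)| + ∫_a^b |Ψ'(y)| dy ). -/

import Mathlib

open MeasureTheory Set intervalIntegral


/-- Transfer iterated derivatives from a bigger set to a smaller one. -/
lemma iter_transfer {n : ℕ} {s t : Set ℝ} (hst : s ⊆ t) (hs : UniqueDiffOn ℝ s)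
    (ht : UniqueDiffOn ℝ t) {f : ℝ → ℝ} (hf : ContDiffOn ℝ n f t) :
    ∀ x ∈ s, iteratedDerivWithin n f s x = iteratedDerivWithin n f t x := by
  induction n with
  | zero => intro x hx; simp [iteratedDerivWithin_zero]
  | succ n IH =>
    intro x hx
    have IH' := IH (hf.of_le (by exact_mod_cast Nat.cast_le.2 n.le_succ))
    rw [iteratedDerivWithin_succ, iteratedDerivWithin_succ]
    have h1 : derivWithin (iteratedDerivWithin n f s) s x
        = derivWithin (iteratedDerivWithin n f t) s x :=
      derivWithin_congr (fun y hy => IH' y hy) (IH' x hx)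
    rw [h1]
    exact derivWithin_subset hst (hs x hx)
      (hf.differentiableOn_iteratedDerivWithin (by exact_mod_cast n.lt_succ_self) ht x (hst hx))



/-- Layer-cake core of the van der Corput k=1 estimate. -/
lemma core_vdc {a b lam m : ℝ} (hab : a < b) (hlam : 0 < lam) (hm : 0 < m)
    (g : ℝ → ℝ) (hgc : Continuous g) (h : ℝ → ℂ) (hhc : Continuous h)
    (hge : ∀ x ∈ Icc a b, m ≤ g x)
    (hmono : MonotoneOn g (Icc a b) ∨ AntitoneOn g (Icc a b))
    (hkey : ∀ u v, a ≤ u → u ≤ v → v ≤ b → ‖∫ x in u..v, h x * g x‖ ≤ 2 / lam) :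
    ‖∫ x in a..b, h x‖ ≤ 2 / (lam * m) := by
  set M := m⁻¹ with hM
  have hMpos : 0 < M := inv_pos.2 hm
  set K : ℝ → ℝ → ℂ := fun x s => (Iio (g x)⁻¹).indicator (fun _ => h x * g x) s with hK
  -- bound for h·g on [a,b]
  obtain ⟨C0, hC0⟩ : ∃ C0, ∀ x ∈ Icc a b, ‖h x * (g x : ℂ)‖ ≤ C0 :=
    isCompact_Icc.exists_bound_of_continuousOn
      ((hhc.mul (Complex.continuous_ofReal.comp hgc)).continuousOn)
  -- Step A : inner s-integral recovers h
  have stepA : ∀ x ∈ Ioc a b, (∫ s in Ioc 0 M, K x s) = h x := by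
    intro x hx
    have hxI : x ∈ Icc a b := Ioc_subset_Icc_self hx
    have hgx : 0 < g x := lt_of_lt_of_le hm (hge x hxI)
    have hcpos : 0 < (g x)⁻¹ := inv_pos.2 hgx
    have hcle : (g x)⁻¹ ≤ M := inv_anti₀ hm (hge x hxI)
    rw [hK]
    simp only
    rw [setIntegral_indicator measurableSet_Iio]
    have : Ioc 0 M ∩ Iio (g x)⁻¹ = Ioo 0 (g x)⁻¹ := by
      ext y; constructor
      · rintro ⟨⟨h1, _⟩, h3⟩; exact ⟨h1, h3⟩
      · rintro ⟨h1, h3⟩; exact ⟨⟨h1, le_trans h3.le hcle⟩, h3⟩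
    rw [this, setIntegral_const, measureReal_def, Real.volume_Ioo]
    rw [ENNReal.toReal_ofReal (by linarith), sub_zero, Complex.real_smul]
    have hgne : (g x : ℂ) ≠ 0 := by exact_mod_cast hgx.ne'
    push_cast
    field_simp
  -- Step D : the inner x-integral is controlled for every s
  have stepD : ∀ s : ℝ, ‖∫ x in Ioc a b, K x s‖ ≤ 2 / lam := by
    intro s
    have hmeas : MeasurableSet {x : ℝ | s < (g x)⁻¹} :=
      measurableSet_lt measurable_const hgc.measurable.inv
    have heq : (∫ x in Ioc a b, K x s) = ∫ x in Ioc a b ∩ {x | s < (g x)⁻¹}, h x * g x := by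
      rw [← setIntegral_indicator hmeas]
      apply setIntegral_congr_fun measurableSet_Ioc
      intro x _
      simp only [hK, indicator, mem_Iio, mem_setOf_eq]
    rw [heq]
    set T := Ioc a b ∩ {x | s < (g x)⁻¹} with hT
    rcases T.eq_empty_or_nonempty with hTe | hTne
    · rw [hTe]; simp; positivity
    · have hTsub : T ⊆ Icc a b := fun y hy => Ioc_subset_Icc_self hy.1
      have hbdd : BddAbove T := (isCompact_Icc.bddAbove).mono hTsub
      have hbdd' : BddBelow T := (isCompact_Icc.bddBelow).mono hTsub
      set u := sInf T with hu
      set v := sSup T with hv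
      have hua : a ≤ u := le_csInf hTne fun y hy => (hTsub hy).1
      have hvb : v ≤ b := csSup_le hTne fun y hy => (hTsub hy).2
      have huv : u ≤ v := csInf_le_csSup hTne hbdd' hbdd
      have hord : ∀ x ∈ T, ∀ z ∈ T, ∀ y, x ≤ y → y ≤ z → y ∈ T := by
        intro x hx z hz y hxy hyz
        have hyI : y ∈ Ioc a b := ⟨lt_of_lt_of_le hx.1.1 hxy, le_trans hyz hz.1.2⟩
        refine ⟨hyI, ?_⟩
        have hgy : 0 < g y := lt_of_lt_of_le hm (hge y (Ioc_subset_Icc_self hyI))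
        rcases hmono with hmo | han
        · have h1 : g y ≤ g z := hmo (Ioc_subset_Icc_self hyI) (hTsub hz) hyz
          have : (g z)⁻¹ ≤ (g y)⁻¹ := inv_anti₀ hgy h1
          exact lt_of_lt_of_le hz.2 this
        · have h1 : g y ≤ g x := by
            have := han (hTsub hx) (Ioc_subset_Icc_self hyI) hxy
            exact this
          have : (g x)⁻¹ ≤ (g y)⁻¹ := inv_anti₀ hgy h1
          exact lt_of_lt_of_le hx.2 this
      have hIoo : Ioo u v ⊆ T := by
        intro y hy
        obtain ⟨t1, ht1T, ht1⟩ := exists_lt_of_csInf_lt hTne hy.1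
        obtain ⟨t2, ht2T, ht2⟩ := exists_lt_of_lt_csSup hTne hy.2
        exact hord t1 ht1T t2 ht2T y ht1.le ht2.le
      have haeq : T =ᵐ[volume] Ioo u v := by
        have hnull : volume ({u, v} : Set ℝ) = 0 :=
          measure_union_null Real.volume_singleton Real.volume_singleton
        rw [MeasureTheory.ae_eq_set]
        constructor
        · refine measure_mono_null ?_ hnull
          intro y hy
          rcases hy with ⟨hyT, hyn⟩
          have h1 : u ≤ y := csInf_le hbdd' hyT
          have h2 : y ≤ v := le_csSup hbdd hyT
          rcases eq_or_lt_of_le h1 with he | hlt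
          · exact Or.inl he.symm
          · rcases eq_or_lt_of_le h2 with he2 | hlt2
            · exact Or.inr he2
            · exact absurd ⟨hlt, hlt2⟩ hyn
        · refine measure_mono_null ?_ (measure_empty)
          intro y hy
          exact absurd (hIoo hy.1) hy.2
      calc ‖∫ x in T, h x * (g x : ℂ)‖
          = ‖∫ x in Ioo u v, h x * (g x : ℂ)‖ := by rw [setIntegral_congr_set haeq]
        _ = ‖∫ x in u..v, h x * (g x : ℂ)‖ := by
            rw [intervalIntegral.integral_of_le huv, ← MeasureTheory.integral_Ioc_eq_integral_Ioo]
        _ ≤ 2 / lam := hkey u v hua huv hvb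
  -- Fubini and conclusion
  have hSmeas : MeasurableSet {p : ℝ × ℝ | p.2 < (g p.1)⁻¹} :=
    measurableSet_lt measurable_snd ((hgc.measurable.comp measurable_fst).inv)
  have hKuncurry : ∀ p : ℝ × ℝ, K p.1 p.2
      = ({p : ℝ × ℝ | p.2 < (g p.1)⁻¹}).indicator (fun p => h p.1 * (g p.1 : ℂ)) p := by
    intro p
    by_cases hp : p.2 < (g p.1)⁻¹
    · rw [hK]; simp only [indicator, mem_Iio, mem_setOf_eq, hp, if_true]
    · rw [hK]; simp only [indicator, mem_Iio, mem_setOf_eq, hp, if_false]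
  have hint : Integrable (Function.uncurry K)
      ((volume.restrict (Ioc a b)).prod (volume.restrict (Ioc 0 M))) := by
    rw [Measure.prod_restrict]
    constructor
    · apply AEStronglyMeasurable.congr
        (((hhc.comp continuous_fst).mul
          (Complex.continuous_ofReal.comp (hgc.comp continuous_fst))).stronglyMeasurable.indicator
            hSmeas).aestronglyMeasurable
      exact Filter.Eventually.of_forall fun p => (hKuncurry p).symm
    · rw [hasFiniteIntegral_iff_norm]
      calc ∫⁻ p in Ioc a b ×ˢ Ioc 0 M, ENNReal.ofReal ‖Function.uncurry K p‖ ∂(volume.prod volume)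
          ≤ ∫⁻ _ in Ioc a b ×ˢ Ioc 0 M, ENNReal.ofReal (max C0 0) ∂(volume.prod volume) := by
            apply lintegral_mono_ae
            filter_upwards [ae_restrict_mem (measurableSet_Ioc.prod measurableSet_Ioc)] with p hp
            apply ENNReal.ofReal_le_ofReal
            rw [Function.uncurry, hKuncurry p]
            refine le_trans (norm_indicator_le_norm_self _ _) ?_
            exact le_max_of_le_left (hC0 p.1 (Ioc_subset_Icc_self hp.1))
        _ < ⊤ := by
            rw [lintegral_const, Measure.restrict_apply_univ, Measure.prod_prod]
            exact ENNReal.mul_lt_top (ENNReal.ofReal_lt_top)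
              (ENNReal.mul_lt_top measure_Ioc_lt_top measure_Ioc_lt_top)
  have swap : (∫ x in Ioc a b, ∫ s in Ioc 0 M, K x s)
      = ∫ s in Ioc 0 M, ∫ x in Ioc a b, K x s := by
    exact MeasureTheory.integral_integral_swap hint
  calc ‖∫ x in a..b, h x‖
      = ‖∫ x in Ioc a b, h x‖ := by rw [intervalIntegral.integral_of_le hab.le]
    _ = ‖∫ s in Ioc 0 M, ∫ x in Ioc a b, K x s‖ := by
        rw [← swap]
        congr 1
        exact setIntegral_congr_fun measurableSet_Ioc fun x hx => (stepA x hx).symm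
    _ ≤ (2 / lam) * (volume (Ioc 0 M)).toReal := by
        apply norm_setIntegral_le_of_norm_le_const measure_Ioc_lt_top
        intro s _
        exact stepD s
    _ = 2 / (lam * m) := by
        rw [Real.volume_Ioc, ENNReal.toReal_ofReal (by linarith), sub_zero, hM]
        field_simp



/-- norm of the complex oscillation is 1 -/
lemma norm_osc (lam t : ℝ) : ‖Complex.exp (Complex.I * lam * t)‖ = 1 := by
  have : Complex.I * lam * t = ((lam * t : ℝ) : ℂ) * Complex.I := by push_cast; ring
  rw [this, Complex.norm_exp_ofReal_mul_I]

/-- van der Corput, first derivative case. -/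
lemma vdc1 {a b lam m : ℝ} (hab : a < b) (hlam : 0 < lam) (hm : 0 < m)
    {Φ : ℝ → ℝ} (hΦ : ContDiffOn ℝ 1 Φ (Icc a b))
    (hge : ∀ x ∈ Icc a b, m ≤ derivWithin Φ (Icc a b) x)
    (hmono : MonotoneOn (derivWithin Φ (Icc a b)) (Icc a b) ∨
      AntitoneOn (derivWithin Φ (Icc a b)) (Icc a b)) :
    ‖∫ x in a..b, Complex.exp (Complex.I * lam * Φ x)‖ ≤ 2 / (lam * m) := by
  have hud : UniqueDiffOn ℝ (Icc a b) := uniqueDiffOn_Icc hab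
  set c : ℝ → ℝ := fun x => min b (max a x) with hc
  have hcc : Continuous c := continuous_const.min (continuous_const.max continuous_id)
  have hcmem : ∀ x, c x ∈ Icc a b := by
    intro x
    constructor
    · exact le_min hab.le (le_max_left _ _)
    · exact min_le_left _ _
  have hcid : ∀ x ∈ Icc a b, c x = x := by
    intro x hx
    rw [hc]
    simp only [max_eq_right hx.1, min_eq_right hx.2]
  set g₀ := derivWithin Φ (Icc a b) with hg₀
  have hg₀c : ContinuousOn g₀ (Icc a b) := hΦ.continuousOn_derivWithin hud le_rfl
  set g : ℝ → ℝ := fun x => g₀ (c x) with hg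
  have hgc : Continuous g := hg₀c.comp_continuous hcc hcmem
  set h : ℝ → ℂ := fun x => Complex.exp (Complex.I * lam * Φ (c x)) with hh
  have hΦc : ContinuousOn Φ (Icc a b) := hΦ.continuousOn
  have hhc : Continuous h := by
    apply Complex.continuous_exp.comp
    apply Continuous.mul continuous_const
    exact Complex.continuous_ofReal.comp (hΦc.comp_continuous hcc hcmem)
  have hge' : ∀ x ∈ Icc a b, m ≤ g x := fun x hx => by
    rw [hg]; simp only [hcid x hx]; exact hge x hx
  have hmono' : MonotoneOn g (Icc a b) ∨ AntitoneOn g (Icc a b) := by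
    rcases hmono with hmo | han
    · left; intro x hx y hy hxy
      simp only [hg, hcid x hx, hcid y hy]
      exact hmo hx hy hxy
    · right; intro x hx y hy hxy
      simp only [hg, hcid x hx, hcid y hy]
      exact han hx hy hxy
  have hIlam : (Complex.I * lam) ≠ 0 := by
    simp [Complex.I_ne_zero, Complex.ofReal_ne_zero, hlam.ne']
  have hkey : ∀ u v, a ≤ u → u ≤ v → v ≤ b → ‖∫ x in u..v, h x * g x‖ ≤ 2 / lam := by
    intro u v hau huv hvb
    have hsub : Icc u v ⊆ Icc a b := Icc_subset_Icc hau hvb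
    have heqon : EqOn (fun x => h x * (g x : ℂ))
        (fun x => Complex.exp (Complex.I * lam * Φ x) * (g₀ x : ℂ)) (uIcc u v) := by
      intro x hx
      rw [uIcc_of_le huv] at hx
      simp only [hh, hg, hcid x (hsub hx)]
    rw [intervalIntegral.integral_congr heqon]
    set f₀ : ℝ → ℂ := fun x => Complex.exp (Complex.I * lam * Φ x) / (Complex.I * lam) with hf₀
    have hcontint : ContinuousOn (fun x => Complex.exp (Complex.I * lam * Φ x) * (g₀ x : ℂ))
        (Icc u v) := by
      apply ContinuousOn.mul
      · exact (Complex.continuous_exp.comp_continuousOn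
          (continuousOn_const.mul (Complex.continuous_ofReal.comp_continuousOn
            (hΦc.mono hsub))))
      · exact Complex.continuous_ofReal.comp_continuousOn (hg₀c.mono hsub)
    have hftc : (∫ x in u..v, Complex.exp (Complex.I * lam * Φ x) * (g₀ x : ℂ))
        = f₀ v - f₀ u := by
      apply intervalIntegral.integral_eq_sub_of_hasDeriv_right_of_le huv
      · exact ((Complex.continuous_exp.comp_continuousOn
          (continuousOn_const.mul (Complex.continuous_ofReal.comp_continuousOn
            (hΦc.mono hsub)))).div_const _)
      · intro x hx
        have hxab : x ∈ Ioo a b := ⟨lt_of_le_of_lt hau hx.1, lt_of_lt_of_le hx.2 hvb⟩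
        have hnhds : Icc a b ∈ nhds x := Icc_mem_nhds hxab.1 hxab.2
        have hdiff : DifferentiableAt ℝ Φ x :=
          ((hΦ.differentiableOn one_ne_zero) x (Ioo_subset_Icc_self hxab)).differentiableAt hnhds
        have hder : HasDerivAt Φ (g₀ x) x := by
          rw [hg₀, derivWithin_of_mem_nhds hnhds]
          exact hdiff.hasDerivAt
        have h1 : HasDerivAt (fun y : ℝ => (Complex.I * lam) * (Φ y : ℂ))
            ((Complex.I * lam) * (g₀ x : ℂ)) x := (hder.ofReal_comp).const_mul _
        have h2 : HasDerivAt (fun y : ℝ => Complex.exp (Complex.I * lam * Φ y))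
            (Complex.exp (Complex.I * lam * Φ x) * ((Complex.I * lam) * (g₀ x : ℂ))) x :=
          h1.cexp
        have h3 := h2.div_const (Complex.I * lam)
        have : Complex.exp (Complex.I * lam * Φ x) * (Complex.I * ↑lam * ↑(g₀ x)) /
            (Complex.I * ↑lam) = Complex.exp (Complex.I * lam * Φ x) * (g₀ x : ℂ) := by
          field_simp
          exact mul_div_cancel_left₀ _ (Complex.ofReal_ne_zero.2 hlam.ne')
        rw [this] at h3
        exact h3.hasDerivWithinAt
      · exact hcontint.intervalIntegrable_of_Icc huv
    rw [hftc]
    have hnorm : ∀ t : ℝ, ‖f₀ t‖ = 1 / lam := by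
      intro t
      rw [hf₀]
      simp only [norm_div]
      rw [norm_osc]
      congr 1
      rw [norm_mul, Complex.norm_I, one_mul, Complex.norm_real, Real.norm_eq_abs,
        abs_of_pos hlam]
    calc ‖f₀ v - f₀ u‖ ≤ ‖f₀ v‖ + ‖f₀ u‖ := norm_sub_le _ _
      _ = 2 / lam := by rw [hnorm, hnorm]; ring
  have := core_vdc hab hlam hm g hgc h hhc hge' hmono' hkey
  calc ‖∫ x in a..b, Complex.exp (Complex.I * lam * Φ x)‖
      = ‖∫ x in a..b, h x‖ := by
        congr 1
        apply intervalIntegral.integral_congr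
        intro x hx
        rw [uIcc_of_le hab.le] at hx
        simp only [hh, hcid x hx]
    _ ≤ 2 / (lam * m) := this



lemma intervalIntegral_conj {f : ℝ → ℂ} {a b : ℝ} :
    (∫ x in a..b, (starRingEnd ℂ) (f x)) = (starRingEnd ℂ) (∫ x in a..b, f x) := by
  rw [intervalIntegral, intervalIntegral, integral_conj, integral_conj, map_sub]

lemma exp_neg_conj (lam t : ℝ) :
    Complex.exp (Complex.I * lam * t) =
      (starRingEnd ℂ) (Complex.exp (Complex.I * lam * ((-t : ℝ) : ℂ))) := by
  rw [← Complex.exp_conj]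
  congr 1
  simp only [map_mul, Complex.conj_I, Complex.conj_ofReal]
  push_cast
  ring

/-- van der Corput lemma, no amplitude. -/
lemma vdc (k : ℕ) (hk : 1 ≤ k) :
    ∃ C : ℝ, 0 < C ∧
      ∀ (a b : ℝ), a ≤ b → ∀ (Φ : ℝ → ℝ) (μ lam : ℝ), 0 < μ → 0 < lam →
        ContDiffOn ℝ k Φ (Icc a b) →
        (∀ x ∈ Icc a b, μ ≤ iteratedDerivWithin k Φ (Icc a b) x) →
        (k = 1 → (MonotoneOn (derivWithin Φ (Icc a b)) (Icc a b) ∨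
                   AntitoneOn (derivWithin Φ (Icc a b)) (Icc a b))) →
        ‖∫ y in a..b, Complex.exp (Complex.I * lam * Φ y)‖ ≤ C * (lam * μ) ^ (-(1 : ℝ) / k) := by
  induction k, hk using Nat.le_induction with
  | base =>
    refine ⟨2, by norm_num, ?_⟩
    intro a b hab Φ μ lam hμ hlam hΦ hder hmono
    have hpow : (lam * μ) ^ (-(1 : ℝ) / ((1:ℕ) : ℝ)) = (lam * μ)⁻¹ := by
      have h1 : (-(1 : ℝ) / ((1:ℕ) : ℝ)) = -1 := by norm_num
      rw [h1, Real.rpow_neg_one]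
    rcases eq_or_lt_of_le hab with he | hlt
    · subst he
      rw [intervalIntegral.integral_same, hpow]
      simp only [norm_zero]
      positivity
    · have hud : UniqueDiffOn ℝ (Icc a b) := uniqueDiffOn_Icc hlt
      have hge : ∀ x ∈ Icc a b, μ ≤ derivWithin Φ (Icc a b) x := by
        intro x hx
        have := hder x hx
        rwa [iteratedDerivWithin_one] at this
      have := vdc1 hlt hlam hμ hΦ hge (hmono rfl)
      rw [hpow]
      calc ‖∫ x in a..b, Complex.exp (Complex.I * lam * Φ x)‖
          ≤ 2 / (lam * μ) := this
        _ = 2 * (lam * μ)⁻¹ := by ring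
  | succ k hk1 IH =>
    obtain ⟨C, hC, IH⟩ := IH
    refine ⟨2 * C + 2, by linarith, ?_⟩
    intro a b hab Φ μ lam hμ hlam hΦ hder _
    classical
    have hA : 0 < lam * μ := mul_pos hlam hμ
    have hkR : (0:ℝ) < k := by exact_mod_cast hk1
    have hk1R : (0:ℝ) < (k:ℝ) + 1 := by linarith
    -- the exponent identity
    have hcast : ((k+1 : ℕ) : ℝ) = (k:ℝ) + 1 := by push_cast; ring
    have hrpow_pos : 0 < (lam * μ) ^ (-(1:ℝ) / ((k:ℝ)+1)) := Real.rpow_pos_of_pos hA _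
    rcases eq_or_lt_of_le hab with he | hlt
    · subst he
      rw [intervalIntegral.integral_same]
      simp only [norm_zero]
      have : (0:ℝ) < (lam * μ) ^ (-(1 : ℝ) / ((k+1 : ℕ) : ℝ)) := Real.rpow_pos_of_pos hA _
      nlinarith
    · -- main case a < b
      have hud : UniqueDiffOn ℝ (Icc a b) := uniqueDiffOn_Icc hlt
      set g := iteratedDerivWithin k Φ (Icc a b) with hg
      have hklt : ((k:ℕ) : WithTop ℕ∞) < ((k+1 : ℕ) : WithTop ℕ∞) := by
        exact_mod_cast Nat.lt_succ_self k
      have hgc : ContinuousOn g (Icc a b) :=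
        hΦ.continuousOn_iteratedDerivWithin (le_of_lt hklt) hud
      have hgd : DifferentiableOn ℝ g (Icc a b) :=
        hΦ.differentiableOn_iteratedDerivWithin hklt hud
      have hder' : ∀ x ∈ Icc a b, μ ≤ derivWithin g (Icc a b) x := by
        intro x hx
        have := hder x hx
        rwa [iteratedDerivWithin_succ] at this
      have hgderiv : ∀ x ∈ Ioo a b, HasDerivAt g (derivWithin g (Icc a b) x) x := by
        intro x hx
        have hnhds : Icc a b ∈ nhds x := Icc_mem_nhds hx.1 hx.2
        have hdiff : DifferentiableAt ℝ g x :=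
          (hgd x (Ioo_subset_Icc_self hx)).differentiableAt hnhds
        rw [derivWithin_of_mem_nhds hnhds]
        exact hdiff.hasDerivAt
      have hgmono : MonotoneOn g (Icc a b) := by
        apply monotoneOn_of_deriv_nonneg (convex_Icc a b) hgc
        · intro x hx
          rw [interior_Icc] at hx
          exact (hgd x (Ioo_subset_Icc_self hx)).differentiableAt
            (Icc_mem_nhds hx.1 hx.2) |>.differentiableWithinAt
        · intro x hx
          rw [interior_Icc] at hx
          rw [(hgderiv x hx).deriv]
          exact le_of_lt (lt_of_lt_of_le hμ (hder' x (Ioo_subset_Icc_self hx)))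
      -- choice of δ
      set δ : ℝ := μ ^ ((k:ℝ)/((k:ℝ)+1)) * lam ^ (-(1:ℝ)/((k:ℝ)+1)) with hδdef
      have hδ : 0 < δ := mul_pos (Real.rpow_pos_of_pos hμ _) (Real.rpow_pos_of_pos hlam _)
      -- the splitting points
      set S : Set ℝ := Icc a b ∩ {x | g x ≤ -δ} with hS
      set S' : Set ℝ := Icc a b ∩ {x | δ ≤ g x} with hS'
      have hScl : IsClosed S := by
        apply hgc.preimage_isClosed_of_isClosed isClosed_Icc isClosed_Iic
      have hS'cl : IsClosed S' := by
        apply hgc.preimage_isClosed_of_isClosed isClosed_Icc isClosed_Ici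
      set p : ℝ := if hSn : S.Nonempty then sSup S else a with hp
      set q : ℝ := if hS'n : S'.Nonempty then sInf S' else b with hq
      have hpmem : p ∈ Icc a b := by
        rw [hp]
        split_ifs with hSn
        · exact (hScl.csSup_mem hSn ((isCompact_Icc.bddAbove).mono inter_subset_left)).1
        · exact ⟨le_rfl, hab⟩
      have hqmem : q ∈ Icc a b := by
        rw [hq]
        split_ifs with hS'n
        · exact (hS'cl.csInf_mem hS'n ((isCompact_Icc.bddBelow).mono inter_subset_left)).1
        · exact ⟨hab, le_rfl⟩
      have hSmem : ∀ h : S.Nonempty, p ∈ S := by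
        intro hSn
        rw [hp, dif_pos hSn]
        exact hScl.csSup_mem hSn ((isCompact_Icc.bddAbove).mono inter_subset_left)
      have hS'mem : ∀ h : S'.Nonempty, q ∈ S' := by
        intro hS'n
        rw [hq, dif_pos hS'n]
        exact hS'cl.csInf_mem hS'n ((isCompact_Icc.bddBelow).mono inter_subset_left)
      have hpq : p ≤ q := by
        by_cases hSn : S.Nonempty
        · by_cases hS'n : S'.Nonempty
          · have hps := hSmem hSn
            have hqs := hS'mem hS'n
            by_contra hcon
            push_neg at hcon
            have := hgmono hqs.1 hps.1 hcon.le
            have h1 : g p ≤ -δ := hps.2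
            have h2 : δ ≤ g q := hqs.2
            linarith
          · rw [hq, dif_neg hS'n]; exact hpmem.2
        · rw [hp, dif_neg hSn]; exact hqmem.1
      -- membership beyond p, q
      have hnotS : ∀ x, p < x → x ∉ S := by
        intro x hx hmem
        by_cases hSn : S.Nonempty
        · have : x ≤ p := by
            rw [hp, dif_pos hSn]
            exact le_csSup ((isCompact_Icc.bddAbove).mono inter_subset_left) hmem
          linarith
        · exact hSn ⟨x, hmem⟩
      have hnotS' : ∀ x, x < q → x ∉ S' := by
        intro x hx hmem
        by_cases hS'n : S'.Nonempty
        · have : q ≤ x := by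
            rw [hq, dif_pos hS'n]
            exact csInf_le ((isCompact_Icc.bddBelow).mono inter_subset_left) hmem
          linarith
        · exact hS'n ⟨x, hmem⟩
      -- middle interval length bound
      have hqp : q - p ≤ 2 * δ / μ := by
        rcases le_or_gt (q - p) 0 with hle | hpos
        · have : 0 ≤ 2 * δ / μ := by positivity
          linarith
        · have key : ∀ x y, p < x → x < y → y < q → y - x ≤ 2 * δ / μ := by
            intro x y hpx hxy hyq
            have hxI : x ∈ Icc a b := ⟨le_trans hpmem.1 (le_of_lt hpx),
              le_trans (le_of_lt (lt_trans hxy hyq)) hqmem.2⟩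
            have hyI : y ∈ Icc a b := ⟨le_trans hxI.1 (le_of_lt hxy),
              le_trans (le_of_lt hyq) hqmem.2⟩
            have hgx : -δ < g x := by
              by_contra hcon
              push_neg at hcon
              exact hnotS x hpx ⟨hxI, hcon⟩
            have hgy : g y < δ := by
              by_contra hcon
              push_neg at hcon
              exact hnotS' y hyq ⟨hyI, hcon⟩
            obtain ⟨ξ, hξ, hslope⟩ := exists_hasDerivAt_eq_slope g
              (derivWithin g (Icc a b)) hxy (hgc.mono (Icc_subset_Icc hxI.1 hyI.2))
              (fun z hz => hgderiv z ⟨lt_of_le_of_lt hxI.1 hz.1, lt_of_lt_of_le hz.2 hyI.2⟩)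
            have hμξ : μ ≤ (g y - g x) / (y - x) := by
              rw [← hslope]
              exact hder' ξ ⟨le_trans hxI.1 (le_of_lt hξ.1), le_trans (le_of_lt hξ.2) hyI.2⟩
            have hxy' : 0 < y - x := by linarith
            rw [le_div_iff₀ hxy'] at hμξ
            rw [le_div_iff₀ hμ]
            nlinarith
          apply le_of_forall_pos_le_add
          intro ε hε
          set ε' := min (ε/2) ((q-p)/3) with hε'
          have hε'pos : 0 < ε' := lt_min (by linarith) (by linarith)
          have hx1 : p < p + ε' := by linarith
          have hy1 : q - ε' < q := by linarith
          rcases lt_or_ge (p + ε') (q - ε') with hxy | hyx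
          · have := key (p + ε') (q - ε') hx1 hxy hy1
            have hε'le : ε' ≤ ε/2 := min_le_left _ _
            linarith
          · have h3 : ε' ≤ (q-p)/3 := min_le_right _ _
            have hε'le : ε' ≤ ε/2 := min_le_left _ _
            have : 0 ≤ 2 * δ / μ := by positivity
            nlinarith
      -- integrability of the oscillating factor
      have hcontexp : ContinuousOn (fun y => Complex.exp (Complex.I * lam * Φ y)) (Icc a b) :=
        Complex.continuous_exp.comp_continuousOn
          (continuousOn_const.mul (Complex.continuous_ofReal.comp_continuousOn hΦ.continuousOn))
      have hInt : ∀ u v, u ∈ Icc a b → v ∈ Icc a b →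
          IntervalIntegrable (fun y => Complex.exp (Complex.I * lam * Φ y)) volume u v := by
        intro u v hu hv
        exact (hcontexp.mono (uIcc_subset_Icc hu hv)).intervalIntegrable
      set X := (lam * δ) ^ (-(1:ℝ)/(k:ℝ)) with hXdef
      have hXpos : 0 < X := Real.rpow_pos_of_pos (mul_pos hlam hδ) _
      -- left piece
      have hleft : ‖∫ y in a..p, Complex.exp (Complex.I * lam * Φ y)‖ ≤ C * X := by
        rcases eq_or_lt_of_le hpmem.1 with he | hlt2
        · rw [← he, intervalIntegral.integral_same]
          simp only [norm_zero]
          positivity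
        · have hSn : S.Nonempty := by
            by_contra hcon
            rw [hp, dif_neg hcon] at hlt2
            exact lt_irrefl a hlt2
          have hudp : UniqueDiffOn ℝ (Icc a p) := uniqueDiffOn_Icc hlt2
          have hsub : Icc a p ⊆ Icc a b := Icc_subset_Icc le_rfl hpmem.2
          have htrans := iter_transfer (n := k) hsub hudp hud (hΦ.of_le hklt.le)
          have hgle : ∀ x ∈ Icc a p, g x ≤ -δ := by
            intro x hx
            have h1 := hgmono (hsub hx) hpmem hx.2
            have h2 : g p ≤ -δ := (hSmem hSn).2
            linarith
          have hneg : ∀ x ∈ Icc a p, δ ≤ iteratedDerivWithin k (-Φ) (Icc a p) x := by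
            intro x hx
            rw [iteratedDerivWithin_neg, htrans x hx]
            have := hgle x hx
            linarith
          have hΦneg : ContDiffOn ℝ k (-Φ) (Icc a p) := ((hΦ.of_le hklt.le).mono hsub).neg
          have hmono1 : k = 1 → (MonotoneOn (derivWithin (-Φ) (Icc a p)) (Icc a p) ∨
              AntitoneOn (derivWithin (-Φ) (Icc a p)) (Icc a p)) := by
            intro hk1e
            subst hk1e
            right
            have ex : ∀ z ∈ Icc a p, derivWithin (-Φ) (Icc a p) z = - g z := by
              intro z hz
              have e1 : derivWithin (-Φ) (Icc a p) z = -derivWithin Φ (Icc a p) z := by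
                exact derivWithin.neg
              rw [e1]
              congr 1
              rw [← iteratedDerivWithin_one, htrans z hz, hg]
            intro x hx y hy hxy
            rw [ex x hx, ex y hy, neg_le_neg_iff]
            exact hgmono (hsub hx) (hsub hy) hxy
          have hIH := IH a p hlt2.le (-Φ) δ lam hδ hlam hΦneg hneg hmono1
          have hconj : (∫ y in a..p, Complex.exp (Complex.I * lam * Φ y))
              = (starRingEnd ℂ) (∫ y in a..p, Complex.exp (Complex.I * lam * ((-Φ) y))) := by
            rw [← _root_.intervalIntegral_conj]
            apply intervalIntegral.integral_congr
            intro y _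
            simp only [Pi.neg_apply]
            exact exp_neg_conj lam (Φ y)
          rw [hconj, RCLike.norm_conj]
          exact hIH
      -- right piece
      have hright : ‖∫ y in q..b, Complex.exp (Complex.I * lam * Φ y)‖ ≤ C * X := by
        rcases eq_or_lt_of_le hqmem.2 with he | hlt2
        · rw [he, intervalIntegral.integral_same]
          simp only [norm_zero]
          positivity
        · have hS'n : S'.Nonempty := by
            by_contra hcon
            rw [hq, dif_neg hcon] at hlt2
            exact lt_irrefl b hlt2
          have hudq : UniqueDiffOn ℝ (Icc q b) := uniqueDiffOn_Icc hlt2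
          have hsub : Icc q b ⊆ Icc a b := Icc_subset_Icc hqmem.1 le_rfl
          have htrans := iter_transfer (n := k) hsub hudq hud (hΦ.of_le hklt.le)
          have hgge : ∀ x ∈ Icc q b, δ ≤ g x := by
            intro x hx
            have h1 := hgmono hqmem (hsub hx) hx.1
            have h2 : δ ≤ g q := (hS'mem hS'n).2
            linarith
          have hposd : ∀ x ∈ Icc q b, δ ≤ iteratedDerivWithin k Φ (Icc q b) x := by
            intro x hx
            rw [htrans x hx]
            exact hgge x hx
          have hΦq : ContDiffOn ℝ k Φ (Icc q b) := (hΦ.of_le hklt.le).mono hsub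
          have hmono1 : k = 1 → (MonotoneOn (derivWithin Φ (Icc q b)) (Icc q b) ∨
              AntitoneOn (derivWithin Φ (Icc q b)) (Icc q b)) := by
            intro hk1e
            subst hk1e
            left
            have ex : ∀ z ∈ Icc q b, derivWithin Φ (Icc q b) z = g z := by
              intro z hz
              rw [← iteratedDerivWithin_one, htrans z hz, hg]
            intro x hx y hy hxy
            rw [ex x hx, ex y hy]
            exact hgmono (hsub hx) (hsub hy) hxy
          exact IH q b hlt2.le Φ δ lam hδ hlam hΦq hposd hmono1
      -- middle piece
      have hmid : ‖∫ y in p..q, Complex.exp (Complex.I * lam * Φ y)‖ ≤ 2 * δ / μ := by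
        calc ‖∫ y in p..q, Complex.exp (Complex.I * lam * Φ y)‖
            ≤ 1 * |q - p| := intervalIntegral.norm_integral_le_of_norm_le_const
              (fun x _ => le_of_eq (norm_osc lam (Φ x)))
          _ = q - p := by rw [one_mul, abs_of_nonneg (by linarith)]
          _ ≤ 2 * δ / μ := hqp
      -- splitting
      have h1 := intervalIntegral.integral_add_adjacent_intervals
        (hInt a p ⟨le_rfl, hab⟩ hpmem) (hInt p q hpmem hqmem)
      have h2 := intervalIntegral.integral_add_adjacent_intervals
        (hInt a q ⟨le_rfl, hab⟩ hqmem) (hInt q b hqmem ⟨hab, le_rfl⟩)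
      have hsplit : (∫ y in a..b, Complex.exp (Complex.I * lam * Φ y))
          = (∫ y in a..p, Complex.exp (Complex.I * lam * Φ y))
            + (∫ y in p..q, Complex.exp (Complex.I * lam * Φ y))
            + (∫ y in q..b, Complex.exp (Complex.I * lam * Φ y)) := by
        rw [h1, h2]
      -- power arithmetic
      have hX : X = (lam * μ) ^ (-(1:ℝ)/((k:ℝ)+1)) := by
        have hlamδ : lam * δ = (lam * μ) ^ ((k:ℝ)/((k:ℝ)+1)) := by
          rw [hδdef, Real.mul_rpow hlam.le hμ.le]
          have e1 : lam * lam ^ (-(1:ℝ)/((k:ℝ)+1)) = lam ^ ((k:ℝ)/((k:ℝ)+1)) := by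
            nth_rewrite 1 [← Real.rpow_one lam]
            rw [← Real.rpow_add hlam]
            congr 1
            field_simp
            ring
          calc lam * (μ ^ ((k:ℝ)/((k:ℝ)+1)) * lam ^ (-(1:ℝ)/((k:ℝ)+1)))
              = (lam * lam ^ (-(1:ℝ)/((k:ℝ)+1))) * μ ^ ((k:ℝ)/((k:ℝ)+1)) := by ring
            _ = lam ^ ((k:ℝ)/((k:ℝ)+1)) * μ ^ ((k:ℝ)/((k:ℝ)+1)) := by rw [e1]
        rw [hXdef, hlamδ, ← Real.rpow_mul hA.le]
        congr 1
        field_simp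
      have hδμe : 2 * δ / μ = 2 * (lam * μ) ^ (-(1:ℝ)/((k:ℝ)+1)) := by
        rw [hδdef, Real.mul_rpow hlam.le hμ.le]
        have e2 : μ ^ ((k:ℝ)/((k:ℝ)+1)) / μ = μ ^ (-(1:ℝ)/((k:ℝ)+1)) := by
          have e3 := Real.rpow_sub hμ ((k:ℝ)/((k:ℝ)+1)) 1
          rw [Real.rpow_one] at e3
          rw [← e3]
          congr 1
          field_simp
          ring
        calc 2 * (μ ^ ((k:ℝ)/((k:ℝ)+1)) * lam ^ (-(1:ℝ)/((k:ℝ)+1))) / μ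
            = 2 * ((μ ^ ((k:ℝ)/((k:ℝ)+1)) / μ) * lam ^ (-(1:ℝ)/((k:ℝ)+1))) := by ring
          _ = 2 * (μ ^ (-(1:ℝ)/((k:ℝ)+1)) * lam ^ (-(1:ℝ)/((k:ℝ)+1))) := by rw [e2]
          _ = 2 * (lam ^ (-(1:ℝ)/((k:ℝ)+1)) * μ ^ (-(1:ℝ)/((k:ℝ)+1))) := by ring
      rw [hsplit, hcast]
      have hnorm3 : ‖(∫ y in a..p, Complex.exp (Complex.I * lam * Φ y))
            + (∫ y in p..q, Complex.exp (Complex.I * lam * Φ y))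
            + (∫ y in q..b, Complex.exp (Complex.I * lam * Φ y))‖
          ≤ C * X + 2 * δ / μ + C * X := by
        refine le_trans (norm_add_le _ _) ?_
        refine add_le_add (le_trans (norm_add_le _ _) (add_le_add hleft hmid)) hright
      rw [hX] at hnorm3
      rw [hδμe] at hnorm3
      calc ‖(∫ y in a..p, Complex.exp (Complex.I * lam * Φ y))
            + (∫ y in p..q, Complex.exp (Complex.I * lam * Φ y))
            + (∫ y in q..b, Complex.exp (Complex.I * lam * Φ y))‖
          ≤ C * (lam * μ) ^ (-(1:ℝ)/((k:ℝ)+1)) + 2 * (lam * μ) ^ (-(1:ℝ)/((k:ℝ)+1))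
            + C * (lam * μ) ^ (-(1:ℝ)/((k:ℝ)+1)) := hnorm3
        _ = (2 * C + 2) * (lam * μ) ^ (-(1:ℝ)/((k:ℝ)+1)) := by ring



theorem statement9 (k : ℕ) (hk : 1 ≤ k) :
    ∃ C : ℝ, 0 < C ∧
      ∀ (a b : ℝ), a ≤ b → ∀ (Φ : ℝ → ℝ) (Ψ : ℝ → ℂ) (μ lam : ℝ), 0 < μ → 0 < lam →
        ContDiffOn ℝ k Φ (Icc a b) →
        ContDiffOn ℝ 1 Ψ (Icc a b) →
        (∀ x ∈ Icc a b, μ ≤ iteratedDerivWithin k Φ (Icc a b) x) →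
        (k = 1 → (MonotoneOn (derivWithin Φ (Icc a b)) (Icc a b) ∨
                   AntitoneOn (derivWithin Φ (Icc a b)) (Icc a b))) →
        ‖∫ y in a..b, Complex.exp (Complex.I * lam * Φ y) * Ψ y‖
          ≤ C * (lam * μ) ^ (-(1 : ℝ) / k) *
            (‖Ψ b‖ + ∫ y in a..b, ‖derivWithin Ψ (Icc a b) y‖) := by
  obtain ⟨C, hC, hvdc⟩ := vdc k hk
  refine ⟨C, hC, ?_⟩
  intro a b hab Φ Ψ μ lam hμ hlam hΦ hΨ hder hmono
  have hA : 0 < lam * μ := mul_pos hlam hμ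
  set M := C * (lam * μ) ^ (-(1 : ℝ) / k) with hM
  have hMpos : 0 < M := mul_pos hC (Real.rpow_pos_of_pos hA _)
  rcases eq_or_lt_of_le hab with he | hlt
  · subst he
    rw [intervalIntegral.integral_same, intervalIntegral.integral_same]
    simp only [norm_zero, add_zero]
    exact mul_nonneg hMpos.le (norm_nonneg _)
  · have hud : UniqueDiffOn ℝ (Icc a b) := uniqueDiffOn_Icc hlt
    set f : ℝ → ℂ := fun y => Complex.exp (Complex.I * lam * Φ y) with hf
    set ψ : ℝ → ℂ := derivWithin Ψ (Icc a b) with hψ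
    set F : ℝ → ℂ := fun x => ∫ y in a..x, f y with hF
    have hfc : ContinuousOn f (Icc a b) :=
      Complex.continuous_exp.comp_continuousOn
        (continuousOn_const.mul (Complex.continuous_ofReal.comp_continuousOn hΦ.continuousOn))
    have hψc : ContinuousOn ψ (Icc a b) := hΨ.continuousOn_derivWithin hud le_rfl
    have hΨc : ContinuousOn Ψ (Icc a b) := hΨ.continuousOn
    have hInt : ∀ u v, u ∈ Icc a b → v ∈ Icc a b → IntervalIntegrable f volume u v :=
      fun u v hu hv => (hfc.mono (uIcc_subset_Icc hu hv)).intervalIntegrable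
    -- the key sup bound on F
    have hFb : ∀ x ∈ Icc a b, ‖F x‖ ≤ M := by
      intro x hx
      rcases eq_or_lt_of_le hx.1 with he | hax
      · rw [hF]
        simp only [← he, intervalIntegral.integral_same, norm_zero]
        exact hMpos.le
      · have hudx : UniqueDiffOn ℝ (Icc a x) := uniqueDiffOn_Icc hax
        have hsub : Icc a x ⊆ Icc a b := Icc_subset_Icc le_rfl hx.2
        have htrans := iter_transfer (n := k) hsub hudx hud hΦ
        apply hvdc a x hax.le Φ μ lam hμ hlam (hΦ.mono hsub)
        · intro z hz
          rw [htrans z hz]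
          exact hder z (hsub hz)
        · intro hk1
          subst hk1
          have ex : ∀ z ∈ Icc a x, derivWithin Φ (Icc a x) z = derivWithin Φ (Icc a b) z := by
            intro z hz
            rw [← iteratedDerivWithin_one, htrans z hz,
              iteratedDerivWithin_one]
          rcases hmono rfl with hmo | han
          · left
            intro u hu v hv huv
            rw [ex u hu, ex v hv]
            exact hmo (hsub hu) (hsub hv) huv
          · right
            intro u hu v hv huv
            rw [ex u hu, ex v hv]
            exact han (hsub hu) (hsub hv) huv
    -- FTC / integration by parts
    have hFder : ∀ x ∈ Ioo a b, HasDerivAt F (f x) x := by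
      intro x hx
      apply intervalIntegral.integral_hasDerivAt_right
        (hInt a x ⟨le_rfl, hab⟩ (Ioo_subset_Icc_self hx))
      · exact ContinuousOn.stronglyMeasurableAtFilter isOpen_Ioo
          (hfc.mono Ioo_subset_Icc_self) x hx
      · exact (hfc x (Ioo_subset_Icc_self hx)).continuousAt (Icc_mem_nhds hx.1 hx.2)
    have hΨder : ∀ x ∈ Ioo a b, HasDerivAt Ψ (ψ x) x := by
      intro x hx
      have hnhds : Icc a b ∈ nhds x := Icc_mem_nhds hx.1 hx.2
      have hdiff : DifferentiableAt ℝ Ψ x :=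
        ((hΨ.differentiableOn one_ne_zero) x (Ioo_subset_Icc_self hx)).differentiableAt hnhds
      rw [hψ, derivWithin_of_mem_nhds hnhds]
      exact hdiff.hasDerivAt
    have hFc : ContinuousOn F (Icc a b) := by
      have := intervalIntegral.continuousOn_primitive_interval
        (f := f) (a := a) (b := b) (μ := volume) ?_
      · rwa [uIcc_of_le hab] at this
      · rw [uIcc_of_le hab]
        exact (hfc.mono (by rfl)).integrableOn_compact isCompact_Icc
    have hcontFΨ : ContinuousOn (fun x => F x * Ψ x) (Icc a b) := hFc.mul hΨc
    have hintg : IntervalIntegrable (fun y => f y * Ψ y + F y * ψ y) volume a b := by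
      apply ContinuousOn.intervalIntegrable
      rw [uIcc_of_le hab]
      exact (hfc.mul hΨc).add (hFc.mul hψc)
    have hftc : (∫ y in a..b, (f y * Ψ y + F y * ψ y)) = F b * Ψ b - F a * Ψ a := by
      apply intervalIntegral.integral_eq_sub_of_hasDeriv_right_of_le hab hcontFΨ
      · intro x hx
        exact ((hFder x hx).mul (hΨder x hx)).hasDerivWithinAt
      · exact hintg
    have hFa : F a = 0 := intervalIntegral.integral_same
    have hint1 : IntervalIntegrable (fun y => f y * Ψ y) volume a b := by
      apply ContinuousOn.intervalIntegrable
      rw [uIcc_of_le hab]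
      exact hfc.mul hΨc
    have hint2 : IntervalIntegrable (fun y => F y * ψ y) volume a b := by
      apply ContinuousOn.intervalIntegrable
      rw [uIcc_of_le hab]
      exact hFc.mul hψc
    have hparts : (∫ y in a..b, f y * Ψ y) = F b * Ψ b - ∫ y in a..b, F y * ψ y := by
      have hadd' : (∫ y in a..b, f y * Ψ y) + (∫ y in a..b, F y * ψ y) = F b * Ψ b := by
        rw [← intervalIntegral.integral_add hint1 hint2, hftc, hFa, zero_mul, sub_zero]
      exact eq_sub_of_add_eq hadd'
    have hmono2 : (∫ y in a..b, ‖F y * ψ y‖) ≤ ∫ y in a..b, M * ‖ψ y‖ := by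
      apply intervalIntegral.integral_mono_on hab
      · apply ContinuousOn.intervalIntegrable
        rw [uIcc_of_le hab]
        exact (hFc.mul hψc).norm
      · apply ContinuousOn.intervalIntegrable
        rw [uIcc_of_le hab]
        exact continuousOn_const.mul hψc.norm
      · intro y hy
        rw [norm_mul]
        exact mul_le_mul_of_nonneg_right (hFb y hy) (norm_nonneg _)
    calc ‖∫ y in a..b, f y * Ψ y‖
        = ‖F b * Ψ b - ∫ y in a..b, F y * ψ y‖ := by rw [hparts]
      _ ≤ ‖F b * Ψ b‖ + ‖∫ y in a..b, F y * ψ y‖ := norm_sub_le _ _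
      _ ≤ M * ‖Ψ b‖ + ∫ y in a..b, ‖F y * ψ y‖ := by
          apply add_le_add
          · rw [norm_mul]
            exact mul_le_mul_of_nonneg_right (hFb b ⟨hab, le_rfl⟩) (norm_nonneg _)
          · exact intervalIntegral.norm_integral_le_integral_norm hab
      _ ≤ M * ‖Ψ b‖ + ∫ y in a..b, M * ‖ψ y‖ := add_le_add le_rfl hmono2
      _ = M * (‖Ψ b‖ + ∫ y in a..b, ‖ψ y‖) := by
          rw [intervalIntegral.integral_const_mul]
          ring
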